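/- Let n = 2^r with r ≥ 1. If a sequence S = (x_1,…,x_k) in Z_n has an even number, at least two, of terms that are units of Z_n (i.e., odd terms), then S is a U(n)-weighted zero-sum sequence; that is, there exist units a_1,…,a_k of Z_n with ∑_{i=1}^k a_i x_i = 0. -/

import Mathlib

open Classical in
/-- The number of terms of the sequence `S` satisfying the predicate `P`. -/
noncomputable def pcount {α : Type*} (P : α → Prop) (S : List α) : ℕ :=
  S.countP fun x => decide (P x)

/-- `S` is an `A`-weighted zero-sum sequence in `ZMod n`: there are weights
`a i ∈ A` with `∑ a i * x i = 0`. -/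
def IsWZSum {n : ℕ} (A : Set (ZMod n)) (S : List (ZMod n)) : Prop :=
  ∃ w : List (ZMod n), w.length = S.length ∧ (∀ a ∈ w, a ∈ A) ∧
    (List.zipWith (· * ·) w S).sum = 0

/-- `S` has an `A`-weighted zero-sum subsequence of length `t ≥ 1`. -/
def HasWZSS {n : ℕ} (A : Set (ZMod n)) (S : List (ZMod n)) (t : ℕ) : Prop :=
  0 < t ∧ ∃ T : List (ZMod n), T.Sublist S ∧ T.length = t ∧ IsWZSum A T

/-- `S` has a nonempty `A`-weighted zero-sum subsequence. -/
def HasWZS {n : ℕ} (A : Set (ZMod n)) (S : List (ZMod n)) : Prop :=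
  ∃ T : List (ZMod n), T.Sublist S ∧ T ≠ [] ∧ IsWZSum A T

/-- The `A`-weighted Davenport constant `D_A(n)`: the least `k > 0` such that every
sequence of length `k` in `ZMod n` has a nonempty `A`-weighted zero-sum subsequence. -/
noncomputable def DavC (n : ℕ) (A : Set (ZMod n)) : ℕ :=
  sInf {k | 0 < k ∧ ∀ S : List (ZMod n), S.length = k → HasWZS A S}

/-- The `A`-weighted Gao constant `E_A(n)`: the least `k > 0` such that every
sequence of length `k` in `ZMod n` has an `A`-weighted zero-sum subsequence of length `n`. -/
noncomputable def GaoC (n : ℕ) (A : Set (ZMod n)) : ℕ :=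
  sInf {k | 0 < k ∧ ∀ S : List (ZMod n), S.length = k → HasWZSS A S n}

/-- The set of units of `ZMod n`. -/
def U (n : ℕ) : Set (ZMod n) := {x | IsUnit x}

/-- An `A`-extremal sequence for the Gao constant: a sequence of length `E_A(n) - 1`
with no `A`-weighted zero-sum subsequence of length `n`. -/
def IsGaoExtremal (n : ℕ) (A : Set (ZMod n)) (S : List (ZMod n)) : Prop :=
  S.length = GaoC n A - 1 ∧ ¬ HasWZSS A S n

/-- `S` and `T` are `A`-equivalent: there are a unit `c`, weights `a i ∈ A` and a
permutation matching the multiset of terms `c * y j` with the multiset `a i * x i`. -/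
def AEquiv {n : ℕ} (A : Set (ZMod n)) (S T : List (ZMod n)) : Prop :=
  ∃ c : ZMod n, IsUnit c ∧ ∃ w : List (ZMod n), w.length = S.length ∧
    (∀ a ∈ w, a ∈ A) ∧ (T.map fun y => c * y).Perm (List.zipWith (· * ·) w S)

private lemma two_dvd_two_pow {r : ℕ} (hr : 1 ≤ r) : 2 ∣ 2 ^ r :=
  dvd_pow_self 2 (by omega)

private lemma zmod2_cases : ∀ y : ZMod 2, y = 0 ∨ y = 1 := by decide

private lemma isUnit_iff_cast {r : ℕ} (hr : 1 ≤ r) (x : ZMod (2 ^ r)) :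
    IsUnit x ↔ ZMod.castHom (two_dvd_two_pow hr) (ZMod 2) x = 1 := by
  have hne : NeZero (2 ^ r) := ⟨by positivity⟩
  have hcast : ZMod.castHom (two_dvd_two_pow hr) (ZMod 2) x = ((x.val : ℕ) : ZMod 2) := by
    rw [ZMod.castHom_apply, ← ZMod.natCast_val]
  rw [hcast]
  constructor
  · intro hx
    have : IsUnit ((x.val : ℕ) : ZMod (2 ^ r)) := by rwa [ZMod.natCast_zmod_val]
    rw [ZMod.isUnit_iff_coprime, Nat.coprime_pow_right_iff (by omega),
      Nat.coprime_two_right] at this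
    rcases zmod2_cases ((x.val : ℕ) : ZMod 2) with h | h
    · exfalso
      rw [ZMod.natCast_eq_zero_iff] at h
      exact (Nat.not_even_iff_odd.mpr this) (even_iff_two_dvd.mpr h)
    · exact h
  · intro h
    have hodd : ¬ (2 ∣ x.val) := by
      intro hdvd
      rw [← ZMod.natCast_eq_zero_iff] at hdvd
      rw [hdvd] at h
      exact one_ne_zero h.symm
    have : IsUnit ((x.val : ℕ) : ZMod (2 ^ r)) := by
      rw [ZMod.isUnit_iff_coprime, Nat.coprime_pow_right_iff (by omega),
        Nat.coprime_two_right]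
      exact Nat.not_even_iff_odd.mp (fun he => hodd (even_iff_two_dvd.mp he))
    rwa [ZMod.natCast_zmod_val] at this

private lemma zipWith_one_mul {n : ℕ} (S : List (ZMod n)) :
    List.zipWith (· * ·) (List.replicate S.length 1) S = S := by
  induction S with
  | nil => simp
  | cons x S ih => simp [List.replicate_succ, ih]

private lemma key_lemma {r : ℕ} (hr : 1 ≤ r) :
    ∀ S : List (ZMod (2 ^ r)), (∃ x ∈ S, IsUnit x) → ∀ t : ZMod (2 ^ r),
    ZMod.castHom (two_dvd_two_pow hr) (ZMod 2) t =
      ZMod.castHom (two_dvd_two_pow hr) (ZMod 2) S.sum →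
    ∃ w : List (ZMod (2 ^ r)), w.length = S.length ∧ (∀ a ∈ w, IsUnit a) ∧
      (List.zipWith (· * ·) w S).sum = t := by
  intro S
  induction S with
  | nil => simp
  | cons x S ih =>
    intro hex t ht
    rw [List.sum_cons, map_add] at ht
    by_cases hS : ∃ y ∈ S, IsUnit y
    · obtain ⟨w, hw1, hw2, hw3⟩ := ih hS (t - x) (by rw [map_sub, ht]; ring)
      refine ⟨1 :: w, by simp [hw1], ?_, ?_⟩
      · intro a ha
        rcases List.mem_cons.mp ha with h | h
        · rw [h]; exact isUnit_one
        · exact hw2 a h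
      · simp [hw3]
    · -- x must be the unit
      have hx : IsUnit x := by
        obtain ⟨y, hy, hyu⟩ := hex
        rcases List.mem_cons.mp hy with h | h
        · rwa [← h]
        · exact absurd ⟨y, h, hyu⟩ hS
      have hu : IsUnit (t - S.sum) := by
        rw [isUnit_iff_cast hr, map_sub, ht, (isUnit_iff_cast hr x).mp hx]
        rcases zmod2_cases (ZMod.castHom (two_dvd_two_pow hr) (ZMod 2) S.sum) with h | h <;>
          rw [h] <;> decide
      obtain ⟨X, hX⟩ := hx
      refine ⟨(t - S.sum) * (↑(X⁻¹) : ZMod (2 ^ r)) :: List.replicate S.length 1,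
        by simp, ?_, ?_⟩
      · intro a ha
        rcases List.mem_cons.mp ha with h | h
        · rw [h]; exact hu.mul (Units.isUnit _)
        · rw [List.eq_of_mem_replicate h]; exact isUnit_one
      · rw [List.zipWith_cons_cons, List.sum_cons, zipWith_one_mul, ← hX]
        rw [mul_assoc]
        simp

private lemma sum_cast_eq_pcount {r : ℕ} (hr : 1 ≤ r) (S : List (ZMod (2 ^ r))) :
    ZMod.castHom (two_dvd_two_pow hr) (ZMod 2) S.sum =
      ((pcount (fun x => IsUnit x) S : ℕ) : ZMod 2) := by
  induction S with
  | nil => simp [pcount]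
  | cons x S ih =>
    rw [List.sum_cons, map_add, ih]
    show _ = (((x :: S).countP _ : ℕ) : ZMod 2)
    rw [List.countP_cons]
    by_cases hx : IsUnit x
    · rw [(isUnit_iff_cast hr x).mp hx]
      simp [hx, pcount, add_comm]
    · have h0 : ZMod.castHom (two_dvd_two_pow hr) (ZMod 2) x = 0 := by
        rcases zmod2_cases (ZMod.castHom (two_dvd_two_pow hr) (ZMod 2) x) with h | h
        · exact h
        · exact absurd ((isUnit_iff_cast hr x).mpr h) hx
      rw [h0]
      simp [hx, pcount]

/-- For `n = 2 ^ r`: if a sequence in `ZMod n` has an even number, at least two, of unit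
terms, then it is a `U(n)`-weighted zero-sum sequence. -/
theorem wzsum_of_even_units_two_pow (r : ℕ) (hr : 1 ≤ r) (S : List (ZMod (2 ^ r)))
    (heven : Even (pcount (fun x => IsUnit x) S))
    (h2 : 2 ≤ pcount (fun x => IsUnit x) S) :
    IsWZSum (U (2 ^ r)) S := by
  have hex : ∃ x ∈ S, IsUnit x := by
    have hpos : 0 < pcount (fun x => IsUnit x) S := lt_of_lt_of_le two_pos h2
    unfold pcount at hpos
    obtain ⟨a, ha, hpa⟩ := List.countP_pos_iff.mp hpos
    exact ⟨a, ha, by simpa using hpa⟩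
  have hsum : ZMod.castHom (two_dvd_two_pow hr) (ZMod 2) S.sum = 0 := by
    rw [sum_cast_eq_pcount hr]
    rw [ZMod.natCast_eq_zero_iff]
    exact heven.two_dvd
  obtain ⟨w, hw1, hw2, hw3⟩ := key_lemma hr S hex 0 (by rw [map_zero, hsum])
  exact ⟨w, hw1, fun a ha => hw2 a ha, hw3⟩
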